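/- Let n ≠ 4 and let 𝒫 be the set of 2-element subsets of {1,...,n}. A permutation φ of 𝒫 satisfies φ·{i,j} ∩ φ·{i,k} ≠ ∅ for all pairwise distinct i,j,k ∈ {1,...,n} if and only if φ is a relabeling, i.e., there exists a permutation π of {1,...,n} such that φ·{i,j} = {π(i), π(j)} for all {i,j} ∈ 𝒫. -/

import Mathlib

/-- The unordered pair `{i, j}` (with `i ≠ j`) as an off-diagonal element of `Sym2 (Fin n)`. -/
def pair {n : ℕ} (i j : Fin n) (h : i ≠ j) : {z : Sym2 (Fin n) // ¬ z.IsDiag} :=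
  ⟨s(i, j), by simpa using h⟩

private lemma ext_lem {α : Type*} {v w1 w2 w3 : α} {z : Sym2 α}
    (h12 : w1 ≠ w2) (h13 : w1 ≠ w3) (h23 : w2 ≠ w3)
    (h1 : ∃ x, x ∈ z ∧ x ∈ s(v, w1)) (h2 : ∃ x, x ∈ z ∧ x ∈ s(v, w2))
    (h3 : ∃ x, x ∈ z ∧ x ∈ s(v, w3)) : v ∈ z := by
  induction z using Sym2.ind with
  | _ a b =>
    simp only [Sym2.mem_iff] at *
    obtain ⟨x1, hx1, hx1'⟩ := h1
    obtain ⟨x2, hx2, hx2'⟩ := h2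
    obtain ⟨x3, hx3, hx3'⟩ := h3
    by_contra hc
    push_neg at hc
    rcases hx1 with rfl | rfl <;> rcases hx2 with rfl | rfl <;> rcases hx3 with rfl | rfl <;>
      rcases hx1' with rfl | rfl <;> rcases hx2' with h | h <;> rcases hx3' with h' | h' <;>
      simp_all

private lemma star4 {α : Type*} {z1 z2 z3 z4 : Sym2 α}
    (nd1 : ¬z1.IsDiag)
    (ne12 : z1 ≠ z2) (ne13 : z1 ≠ z3) (ne14 : z1 ≠ z4) (ne23 : z2 ≠ z3)
    (ne24 : z2 ≠ z4) (ne34 : z3 ≠ z4)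
    (i12 : ∃ x, x ∈ z1 ∧ x ∈ z2) (i13 : ∃ x, x ∈ z1 ∧ x ∈ z3)
    (i14 : ∃ x, x ∈ z1 ∧ x ∈ z4) (i23 : ∃ x, x ∈ z2 ∧ x ∈ z3)
    (i24 : ∃ x, x ∈ z2 ∧ x ∈ z4) (i34 : ∃ x, x ∈ z3 ∧ x ∈ z4) :
    ∃ v, v ∈ z1 ∧ v ∈ z2 ∧ v ∈ z3 ∧ v ∈ z4 := by
  obtain ⟨x, hx1, hx2⟩ := i12
  obtain ⟨y1, hz1⟩ := Sym2.mem_iff_exists.1 hx1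
  obtain ⟨y2, hz2⟩ := Sym2.mem_iff_exists.1 hx2
  have hy1x : y1 ≠ x := by rintro rfl; exact nd1 (by rw [hz1]; simp)
  have hy12 : y1 ≠ y2 := by
    intro h; apply ne12; rw [hz1, hz2, h]
  by_cases hx3 : x ∈ z3
  · obtain ⟨y3, hz3⟩ := Sym2.mem_iff_exists.1 hx3
    have hy13 : y1 ≠ y3 := by intro h; apply ne13; rw [hz1, hz3, h]
    have hy23 : y2 ≠ y3 := by intro h; apply ne23; rw [hz2, hz3, h]
    refine ⟨x, hx1, hx2, hx3, ?_⟩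
    refine ext_lem hy12 hy13 hy23 ?_ ?_ ?_
    · obtain ⟨q, hq1, hq4⟩ := i14; exact ⟨q, hq4, hz1 ▸ hq1⟩
    · obtain ⟨q, hq1, hq4⟩ := i24; exact ⟨q, hq4, hz2 ▸ hq1⟩
    · obtain ⟨q, hq1, hq4⟩ := i34; exact ⟨q, hq4, hz3 ▸ hq1⟩
  · exfalso
    have hy1z3 : y1 ∈ z3 := by
      obtain ⟨p, hp1, hp3⟩ := i13
      rw [hz1, Sym2.mem_iff] at hp1
      rcases hp1 with rfl | rfl
      · exact absurd hp3 hx3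
      · exact hp3
    have hy2z3 : y2 ∈ z3 := by
      obtain ⟨p, hp2, hp3⟩ := i23
      rw [hz2, Sym2.mem_iff] at hp2
      rcases hp2 with rfl | rfl
      · exact absurd hp3 hx3
      · exact hp3
    have hz3 : z3 = s(y1, y2) := (Sym2.mem_and_mem_iff hy12).1 ⟨hy1z3, hy2z3⟩
    by_cases hx4 : x ∈ z4
    · obtain ⟨r, hr3, hr4⟩ := i34
      rw [hz3, Sym2.mem_iff] at hr3
      have hy2x : y2 ≠ x := fun h => hx3 (h ▸ hy2z3)
      rcases hr3 with h | h
      · exact ne14 (by rw [hz1, (Sym2.mem_and_mem_iff (Ne.symm hy1x)).1 ⟨hx4, h ▸ hr4⟩])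
      · exact ne24 (by rw [hz2, (Sym2.mem_and_mem_iff (Ne.symm hy2x)).1 ⟨hx4, h ▸ hr4⟩])
    · have hy1z4 : y1 ∈ z4 := by
        obtain ⟨p, hp1, hp4⟩ := i14
        rw [hz1, Sym2.mem_iff] at hp1
        rcases hp1 with rfl | rfl
        · exact absurd hp4 hx4
        · exact hp4
      have hy2z4 : y2 ∈ z4 := by
        obtain ⟨p, hp2, hp4⟩ := i24
        rw [hz2, Sym2.mem_iff] at hp2
        rcases hp2 with rfl | rfl
        · exact absurd hp4 hx4
        · exact hp4
      exact ne34 (by rw [hz3, (Sym2.mem_and_mem_iff hy12).1 ⟨hy1z4, hy2z4⟩])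

private lemma pair_ne {n : ℕ} {i a b : Fin n} (ha : i ≠ a) (hb : i ≠ b) (hab : a ≠ b) :
    pair i a ha ≠ pair i b hb := by
  intro h
  rw [pair, pair, Subtype.mk.injEq, Sym2.eq_iff] at h
  rcases h with ⟨-, h⟩ | ⟨h1, -⟩
  · exact hab h
  · exact hb h1

theorem stmt_2 (n : ℕ) (hn : n ≠ 4) (φ : Equiv.Perm {z : Sym2 (Fin n) // ¬ z.IsDiag}) :
    (∀ (i j k : Fin n) (hij : i ≠ j) (hik : i ≠ k), j ≠ k →
        ∃ x, x ∈ (φ (pair i j hij)).val ∧ x ∈ (φ (pair i k hik)).val) ↔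
      ∃ π : Equiv.Perm (Fin n), ∀ (i j : Fin n) (h : i ≠ j),
        (φ (pair i j h)).val = s(π i, π j) := by
  rcases lt_or_ge n 5 with h5 | h5
  · -- small cases by decision procedure
    interval_cases n
    · revert φ; decide
    · revert φ; decide
    · revert φ; decide
    · revert φ; decide
    · exact absurd rfl hn
  · obtain ⟨m, rfl⟩ : ∃ m, n = m + 5 := ⟨n - 5, by omega⟩
    clear hn h5
    constructor
    · intro H
      -- step 1: each star has a common vertex in the image
      have key : ∀ i : Fin (m + 5), ∃ v, ∀ x (h : i ≠ x), v ∈ (φ (pair i x h)).val := by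
        intro i
        have hinj := Fin.succAbove_right_injective (p := i)
        set a := i.succAbove ⟨0, by omega⟩ with hadef
        set b := i.succAbove ⟨1, by omega⟩ with hbdef
        set c := i.succAbove ⟨2, by omega⟩ with hcdef
        set d := i.succAbove ⟨3, by omega⟩ with hddef
        have ha : i ≠ a := (Fin.succAbove_ne i _).symm
        have hb : i ≠ b := (Fin.succAbove_ne i _).symm
        have hc : i ≠ c := (Fin.succAbove_ne i _).symm
        have hd : i ≠ d := (Fin.succAbove_ne i _).symm
        have hab : a ≠ b := fun h => by have := hinj h; simp [Fin.ext_iff] at this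
        have hac : a ≠ c := fun h => by have := hinj h; simp [Fin.ext_iff] at this
        have had : a ≠ d := fun h => by have := hinj h; simp [Fin.ext_iff] at this
        have hbc : b ≠ c := fun h => by have := hinj h; simp [Fin.ext_iff] at this
        have hbd : b ≠ d := fun h => by have := hinj h; simp [Fin.ext_iff] at this
        have hcd : c ≠ d := fun h => by have := hinj h; simp [Fin.ext_iff] at this
        have valne : ∀ {p q : Fin (m+5)} (hp : i ≠ p) (hq : i ≠ q), p ≠ q →
            (φ (pair i p hp)).val ≠ (φ (pair i q hq)).val := by
          intro p q hp hq hpq h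
          exact pair_ne hp hq hpq (φ.injective (Subtype.ext h))
        obtain ⟨v, hv1, hv2, hv3, hv4⟩ :=
          star4 (z1 := (φ (pair i a ha)).val) (φ (pair i a ha)).2
            (valne ha hb hab) (valne ha hc hac) (valne ha hd had)
            (valne hb hc hbc) (valne hb hd hbd) (valne hc hd hcd)
            (H i a b ha hb hab) (H i a c ha hc hac) (H i a d ha hd had)
            (H i b c hb hc hbc) (H i b d hb hd hbd) (H i c d hc hd hcd)
        refine ⟨v, ?_⟩
        intro x hx
        by_cases hxa : x = a
        · subst hxa; exact hv1
        by_cases hxb : x = b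
        · subst hxb; exact hv2
        by_cases hxc : x = c
        · subst hxc; exact hv3
        -- use the extension lemma with z1, z2, z3
        obtain ⟨w1, hw1⟩ := Sym2.mem_iff_exists.1 hv1
        obtain ⟨w2, hw2⟩ := Sym2.mem_iff_exists.1 hv2
        obtain ⟨w3, hw3⟩ := Sym2.mem_iff_exists.1 hv3
        have h12 : w1 ≠ w2 := fun h => valne ha hb hab (by rw [hw1, hw2, h])
        have h13 : w1 ≠ w3 := fun h => valne ha hc hac (by rw [hw1, hw3, h])
        have h23 : w2 ≠ w3 := fun h => valne hb hc hbc (by rw [hw2, hw3, h])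
        refine ext_lem h12 h13 h23 ?_ ?_ ?_
        · obtain ⟨q, hq, hq'⟩ := H i x a hx ha hxa; exact ⟨q, hq, hw1 ▸ hq'⟩
        · obtain ⟨q, hq, hq'⟩ := H i x b hx hb hxb; exact ⟨q, hq, hw2 ▸ hq'⟩
        · obtain ⟨q, hq, hq'⟩ := H i x c hx hc hxc; exact ⟨q, hq, hw3 ▸ hq'⟩
      choose v hv using key
      -- step 2: v is injective
      have vinj : Function.Injective v := by
        intro i j hvij
        by_contra hij
        set V := v i with hVdef
        -- a junk value for total functions
        set junk := φ (pair i j hij) with hjunkdef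
        set f : Fin (m+5) → {z : Sym2 (Fin (m+5)) // ¬ z.IsDiag} :=
          fun x => if hx : i ≠ x then φ (pair i x hx) else junk with hfdef
        set g : Fin (m+5) → {z : Sym2 (Fin (m+5)) // ¬ z.IsDiag} :=
          fun x => if hx : j ≠ x then φ (pair j x hx) else junk with hgdef
        set A := (Finset.univ.erase i).image f with hAdef
        set B := (Finset.univ.erase j).image g with hBdef
        set C := Finset.univ.filter
          (fun z : {z : Sym2 (Fin (m+5)) // ¬ z.IsDiag} => V ∈ z.val) with hCdef
        have hAcard : A.card = m + 4 := by
          have hinjOn : Set.InjOn f (Finset.univ.erase i) := by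
            intro x hx y hy hxy
            rw [Finset.mem_coe] at hx hy
            rw [Finset.mem_erase] at hx hy
            have hxi : i ≠ x := Ne.symm hx.1
            have hyi : i ≠ y := Ne.symm hy.1
            simp only [hfdef, dif_pos hxi, dif_pos hyi] at hxy
            have := φ.injective hxy
            rw [pair, pair, Subtype.mk.injEq, Sym2.eq_iff] at this
            rcases this with ⟨-, h⟩ | ⟨h1, -⟩
            · exact h
            · exact absurd h1 hyi
          rw [hAdef, Finset.card_image_of_injOn hinjOn,
            Finset.card_erase_of_mem (Finset.mem_univ i), Finset.card_univ, Fintype.card_fin]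
          omega
        have hsub : A ∪ B ⊆ C := by
          intro z hz
          rw [hCdef, Finset.mem_filter]
          refine ⟨Finset.mem_univ _, ?_⟩
          rw [Finset.mem_union] at hz
          rcases hz with hz | hz
          · rw [hAdef] at hz
            obtain ⟨x, hx, rfl⟩ := Finset.mem_image.1 hz
            rw [Finset.mem_erase] at hx
            have hxi : i ≠ x := Ne.symm hx.1
            rw [hfdef]; simp only [dif_pos hxi]
            exact hv i x hxi
          · rw [hBdef] at hz
            obtain ⟨x, hx, rfl⟩ := Finset.mem_image.1 hz
            rw [Finset.mem_erase] at hx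
            have hxj : j ≠ x := Ne.symm hx.1
            rw [hgdef]; simp only [dif_pos hxj]
            have := hv j x hxj
            rwa [← hvij, hVdef] at this
        have hCcard : C.card ≤ m + 4 := by
          have hle := Finset.card_le_card_of_injOn
            (f := fun z : {z : Sym2 (Fin (m+5)) // ¬ z.IsDiag} =>
              if hz : V ∈ z.val then Sym2.Mem.other hz else V)
            (s := C) (t := Finset.univ.erase V) ?_ ?_
          · have : (Finset.univ.erase V).card = m + 4 := by
              rw [Finset.card_erase_of_mem (Finset.mem_univ V), Finset.card_univ,
                Fintype.card_fin]
              omega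
            omega
          · intro z hz
            simp only [Finset.mem_coe, hCdef, Finset.mem_filter] at hz
            simp only [dif_pos hz.2, Finset.mem_coe, Finset.mem_erase]
            exact ⟨Sym2.other_ne z.2 hz.2, Finset.mem_univ _⟩
          · intro z hz z' hz' hzz
            simp only [Finset.mem_coe, hCdef, Finset.mem_filter] at hz hz'
            simp only [dif_pos hz.2, dif_pos hz'.2] at hzz
            apply Subtype.ext
            rw [← Sym2.other_spec hz.2, ← Sym2.other_spec hz'.2, hzz]
        -- find y distinct from i and j
        obtain ⟨y, hy, hy'⟩ : ∃ y, y ∈ Finset.univ ∧ y ∉ ({i, j} : Finset (Fin (m+5))) := by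
          apply Finset.exists_of_ssubset
          rw [Finset.ssubset_univ_iff]
          intro h
          have h1 : ({i, j} : Finset (Fin (m+5))).card ≤ 2 :=
            (Finset.card_insert_le _ _).trans (by simp)
          rw [h, Finset.card_univ, Fintype.card_fin] at h1
          omega
        simp only [Finset.mem_insert, Finset.mem_singleton, not_or] at hy'
        obtain ⟨hyi, hyj⟩ := hy'
        have hjy : j ≠ y := Ne.symm hyj
        have hgyB : g y ∈ B := by
          rw [hBdef]
          exact Finset.mem_image.2 ⟨y, Finset.mem_erase.2 ⟨hyj, Finset.mem_univ _⟩, rfl⟩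
        have hgyA : g y ∉ A := by
          rw [hAdef]
          intro hmem
          obtain ⟨x, hx, hfx⟩ := Finset.mem_image.1 hmem
          rw [Finset.mem_erase] at hx
          have hxi : i ≠ x := Ne.symm hx.1
          rw [hfdef, hgdef] at hfx
          simp only [dif_pos hxi, dif_pos hjy] at hfx
          have := φ.injective hfx
          rw [pair, pair, Subtype.mk.injEq, Sym2.eq_iff] at this
          rcases this with ⟨h1, h2⟩ | ⟨h1, h2⟩ <;>
            first
              | exact hij h1 | exact hij h1.symm | exact hyi h1 | exact hyi h1.symm
        have hAssub : A ⊂ A ∪ B := by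
          constructor
          · exact Finset.subset_union_left
          · intro hcontra
            exact hgyA (hcontra (Finset.mem_union_right _ hgyB))
        have h1 := Finset.card_lt_card hAssub
        have h2 := Finset.card_le_card hsub
        omega
      refine ⟨Equiv.ofBijective v ((Finite.injective_iff_bijective).1 vinj), ?_⟩
      intro i j h
      have h1 : v i ∈ (φ (pair i j h)).val := hv i j h
      have h2 : v j ∈ (φ (pair i j h)).val := by
        have e : pair j i (Ne.symm h) = pair i j h := Subtype.ext Sym2.eq_swap
        have := hv j i (Ne.symm h)
        rwa [e] at this
      have hne : v i ≠ v j := fun hh => h (vinj hh)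
      exact (Sym2.mem_and_mem_iff hne).1 ⟨h1, h2⟩
    · rintro ⟨π, hπ⟩ i j k hij hik hjk
      refine ⟨π i, ?_, ?_⟩
      · rw [hπ i j hij]; simp
      · rw [hπ i k hik]; simp
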